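/- arXiv:1305.5100 — 6 statements merged into one kernel-verified Lean document; each statement's English description precedes it below -/
import Mathlib

section
/- For ξ, η ∈ C_c(X) the map (g,x) ↦ Δ(g)^{-1/2} · conj(ξ(x)) · η(g⁻¹x) defines an element of C_c(G, C_0(X)); i.e., it is continuous and has compact support in G (uniformly in x) whenever the action of G on X is proper. -/
open MeasureTheory

noncomputable section

/-- If `G` acts properly on the locally compact Hausdorff space `X`, then for
`ξ, η ∈ C_c(X)` the map `(g,x) ↦ Δ(g)^{-1/2} · conj(ξ x) · η (g⁻¹ • x)` is continuous and has
compact support on `G × X`; i.e. it defines an element of `C_c(G, C_0(X))` with compact support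
in `G` uniformly in `x`. -/
theorem statement2 {G X : Type*} [Group G] [TopologicalSpace G] [IsTopologicalGroup G]
    [TopologicalSpace X] [T2Space X] [LocallyCompactSpace X]
    [MulAction G X] [ContinuousSMul G X] [ProperSMul G X]
    (Δ : G →* ℝ) (hΔpos : ∀ t, 0 < Δ t) (hΔcont : Continuous Δ)
    (ξ η : X → ℂ) (hξ : Continuous ξ) (hξc : HasCompactSupport ξ)
    (hη : Continuous η) (hηc : HasCompactSupport η) :
    Continuous (fun p : G × X =>
        (((Δ p.1) ^ (-(1:ℝ)/2) : ℝ) : ℂ) * (starRingEnd ℂ) (ξ p.2) * η (p.1⁻¹ • p.2)) ∧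
    HasCompactSupport (fun p : G × X =>
        (((Δ p.1) ^ (-(1:ℝ)/2) : ℝ) : ℂ) * (starRingEnd ℂ) (ξ p.2) * η (p.1⁻¹ • p.2)) := by
  have hsmul : Continuous (fun p : G × X => p.1⁻¹ • p.2) :=
    (continuous_fst.inv).smul continuous_snd
  have hcont : Continuous (fun p : G × X =>
      (((Δ p.1) ^ (-(1:ℝ)/2) : ℝ) : ℂ) * (starRingEnd ℂ) (ξ p.2) * η (p.1⁻¹ • p.2)) := by
    refine ((Complex.continuous_ofReal.comp ?_).mul
      (continuous_star.comp (hξ.comp continuous_snd))).mul (hη.comp hsmul)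
    exact ((hΔcont.comp continuous_fst).rpow_const fun p => Or.inl (hΔpos p.1).ne')
  refine ⟨hcont, ?_⟩
  -- the map (g,x) ↦ (g⁻¹ • x, x) is proper
  have hf : IsProperMap (fun p : G × X => (p.1⁻¹ • p.2, p.2)) := by
    have h1 : IsProperMap (fun p : G × X => (p.1 • p.2, p.2)) :=
      ProperSMul.isProperMap_smul_pair
    have h2 : IsProperMap (fun p : G × X => (p.1⁻¹, p.2)) := by
      have := (Homeomorph.prodCongr (Homeomorph.inv G) (Homeomorph.refl X) :
        G × X ≃ₜ G × X).isProperMap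
      convert this using 1
      rfl
    have := h1.comp h2
    convert this using 1
    rfl
  set C : Set (G × X) := (fun p : G × X => (p.1⁻¹ • p.2, p.2)) ⁻¹'
    (tsupport η ×ˢ tsupport ξ) with hC
  have hCc : IsCompact C := hf.isCompact_preimage (hηc.prod hξc)
  have hCcl : IsClosed C := (IsClosed.prod (isClosed_tsupport η)
    (isClosed_tsupport ξ)).preimage (hsmul.prodMk continuous_snd)
  have hsub : tsupport (fun p : G × X =>
      (((Δ p.1) ^ (-(1:ℝ)/2) : ℝ) : ℂ) * (starRingEnd ℂ) (ξ p.2) * η (p.1⁻¹ • p.2)) ⊆ C := by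
    apply closure_minimal ?_ hCcl
    intro p hp
    simp only [Function.mem_support, ne_eq, mul_eq_zero, not_or] at hp
    refine ⟨subset_closure ?_, subset_closure ?_⟩
    · exact hp.2
    · intro h; exact hp.1.2 (by simp [h])
  exact hCc.of_isClosed_subset (isClosed_tsupport _) hsub
end
end

section
/- Let E ⊆ B(G) be a nonzero G-invariant weak-* closed ideal of the Fourier–Stieltjes algebra, identified with the dual of C*(G). Then the pre-annihilator ⊥E = {x ∈ C*(G) : f(x) = 0 for all f ∈ E} is a closed two-sided ideal of C*(G). -/
open MeasureTheory

noncomputable section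

/-- Let `A` play the role of the full group C*-algebra `C*(G)`: the group `G`
is represented by unitaries (here invertible elements `u : G →* Aˣ`) whose linear span is dense
in `A`.  The Fourier–Stieltjes algebra `B(G)` is identified with the dual `WeakDual ℂ A`.
If `E ⊆ WeakDual ℂ A` is a nonzero `G`-invariant weak-* closed subspace (invariance under the
left and right translations `f ↦ f(u_s · )`, `f ↦ f( · u_s)`), then the pre-annihilator
`⊥E = {x ∈ A : f x = 0 for all f ∈ E}` is a (norm-)closed two-sided ideal of `A`. -/
theorem statement5 {G A : Type*} [Group G]
    [NormedRing A] [StarRing A] [CStarRing A] [NormedAlgebra ℂ A] [StarModule ℂ A]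
    [CompleteSpace A]
    (u : G →* Aˣ)
    (hdense : Dense ((Submodule.span ℂ (Set.range fun s : G => ((u s : Aˣ) : A))) : Set A))
    (E : Set (WeakDual ℂ A)) (hne : E.Nonempty)
    (hadd : ∀ f ∈ E, ∀ g ∈ E, f + g ∈ E) (hsmul : ∀ f ∈ E, ∀ c : ℂ, c • f ∈ E)
    (hclosed : IsClosed E)
    (hGinv : ∀ f ∈ E, ∀ s : G,
        (∃ fl ∈ E, ∀ x : A, fl x = f (((u s : Aˣ) : A) * x)) ∧
        (∃ fr ∈ E, ∀ x : A, fr x = f (x * ((u s : Aˣ) : A)))) :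
    IsClosed {x : A | ∀ f ∈ E, f x = 0} ∧
    (∀ x ∈ {x : A | ∀ f ∈ E, f x = 0}, ∀ y ∈ {x : A | ∀ f ∈ E, f x = 0},
        x + y ∈ {x : A | ∀ f ∈ E, f x = 0}) ∧
    (∀ x ∈ {x : A | ∀ f ∈ E, f x = 0}, ∀ c : ℂ, c • x ∈ {x : A | ∀ f ∈ E, f x = 0}) ∧
    (∀ x ∈ {x : A | ∀ f ∈ E, f x = 0}, ∀ a : A,
        a * x ∈ {x : A | ∀ f ∈ E, f x = 0} ∧ x * a ∈ {x : A | ∀ f ∈ E, f x = 0}) := by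
  -- A helper: a continuous linear functional vanishing on the range of `u` is zero.
  have key : ∀ φ : A →L[ℂ] ℂ, (∀ s : G, φ ((u s : Aˣ) : A) = 0) → ∀ a : A, φ a = 0 := by
    intro φ hφ a
    have hspan : (Submodule.span ℂ (Set.range fun s : G => ((u s : Aˣ) : A)))
        ≤ LinearMap.ker (φ : A →ₗ[ℂ] ℂ) := by
      rw [Submodule.span_le]
      rintro _ ⟨s, rfl⟩
      simpa using hφ s
    have heq : Set.EqOn (fun x : A => φ x) (fun _ => (0 : ℂ))
        ((Submodule.span ℂ (Set.range fun s : G => ((u s : Aˣ) : A))) : Set A) := by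
      intro x hx
      exact hspan hx
    have := Continuous.ext_on hdense φ.continuous continuous_const heq
    exact congrFun this a
  refine ⟨?_, ?_, ?_, ?_⟩
  · have : {x : A | ∀ f ∈ E, f x = 0} = ⋂ f ∈ E, ((f : A →L[ℂ] ℂ) ⁻¹' {0}) := by
      ext x; simp [Set.mem_iInter]
    rw [this]
    exact isClosed_biInter fun f _ => (isClosed_singleton).preimage (f : A →L[ℂ] ℂ).continuous
  · intro x hx y hy f hf
    simp [map_add, hx f hf, hy f hf]
  · intro x hx c f hf
    simp [_root_.map_smul, hx f hf]
  · intro x hx a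
    constructor
    · intro f hf
      set φ : A →L[ℂ] ℂ := (f : A →L[ℂ] ℂ).comp ((ContinuousLinearMap.mul ℂ A).flip x) with hφdef
      have hφ : ∀ s : G, φ ((u s : Aˣ) : A) = 0 := by
        intro s
        obtain ⟨⟨fl, hflE, hfl⟩, -⟩ := hGinv f hf s
        have : φ ((u s : Aˣ) : A) = fl x := by
          exact (hfl x).symm
        rw [this]
        exact hx fl hflE
      have := key φ hφ a
      exact this
    · intro f hf
      set φ : A →L[ℂ] ℂ := (f : A →L[ℂ] ℂ).comp (ContinuousLinearMap.mul ℂ A x) with hφdef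
      have hφ : ∀ s : G, φ ((u s : Aˣ) : A) = 0 := by
        intro s
        obtain ⟨-, ⟨fr, hfrE, hfr⟩⟩ := hGinv f hf s
        have : φ ((u s : Aˣ) : A) = fr x := by
          exact (hfr x).symm
        rw [this]
        exact hx fr hfrE
      have := key φ hφ a
      exact this
end
end

section
/- Let (E,γ) be a weakly proper (B, X⋊G)-module. For ξ, η ∈ F_c(E) := C_c(X)·E define ⟨⟨ξ,η⟩⟩(t) = Δ(t)^{-1/2} ⟨ξ, γ_t(η)⟩_B. Then ⟨⟨ξ,η⟩⟩ belongs to C_c(G,B): it is continuous and compactly supported in t, because the G-action on X is proper. -/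
open MeasureTheory

noncomputable section

/-- Let `(E,γ)` be a weakly proper `(B, X⋊G)`-module, with structure map given
by the module action `act` of functions on `X` on `E`.  For `ξ = f·ξ₀` and `η = g·η₀` in
`F_c(E) = C_c(X)·E`, the function `t ↦ Δ(t)^{-1/2} ⟨ξ, γ_t η⟩_B` is continuous and compactly
supported (by properness of the `G`-action on `X`), i.e. belongs to `C_c(G,B)`. -/
theorem statement8 {G X B E : Type*} [Group G] [TopologicalSpace G] [IsTopologicalGroup G]
    [TopologicalSpace X] [T2Space X] [LocallyCompactSpace X]
    [MulAction G X] [ContinuousSMul G X] [ProperSMul G X]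
    [NormedRing B] [StarRing B] [CStarRing B] [NormedAlgebra ℂ B] [CompleteSpace B]
    [NormedAddCommGroup E] [NormedSpace ℂ E]
    (β : G →* (B ≃ₐ[ℂ] B)) (hβstar : ∀ (t : G) (b : B), β t (star b) = star (β t b))
    (γ : G →* (E ≃ₗ[ℂ] E))
    (inner : E → E → B)
    (hequiv : ∀ (s : G) (a b : E), inner (γ s a) (γ s b) = β s (inner a b))
    (act : (X → ℂ) → E → E)
    (hadj : ∀ (f : X → ℂ) (a b : E),
        inner (act f a) b = inner a (act (fun x => (starRingEnd ℂ) (f x)) b))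
    (hcomp : ∀ (f g : X → ℂ) (e : E), act f (act g e) = act (fun x => f x * g x) e)
    (hzero : ∀ (a e : E), inner a (act (fun _ => (0:ℂ)) e) = 0)
    (hactequiv : ∀ (t : G) (g : X → ℂ) (e : E),
        γ t (act g e) = act (fun x => g (t⁻¹ • x)) (γ t e))
    (Δ : G →* ℝ) (hΔpos : ∀ t, 0 < Δ t) (hΔcont : Continuous Δ)
    (hstrong : ∀ e : E, Continuous fun t : G => γ t e)
    (hinnercont : ∀ a : E, Continuous fun e : E => inner a e)
    (f g : X → ℂ) (hf : Continuous f) (hfc : HasCompactSupport f)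
    (hg : Continuous g) (hgc : HasCompactSupport g)
    (ξ₀ η₀ : E) :
    Continuous (fun t : G =>
        ((Δ t) ^ (-(1:ℝ)/2)) • inner (act f ξ₀) (γ t (act g η₀))) ∧
    HasCompactSupport (fun t : G =>
        ((Δ t) ^ (-(1:ℝ)/2)) • inner (act f ξ₀) (γ t (act g η₀))) := by
  constructor
  · exact (hΔcont.rpow_const (fun t => Or.inl (hΔpos t).ne')).smul
      ((hinnercont (act f ξ₀)).comp (hstrong (act g η₀)))
  · -- compact support
    set K := tsupport g with hK
    set L := tsupport f with hL
    have hKc : IsCompact K := hgc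
    have hLc : IsCompact L := hfc
    have hΦ : IsProperMap (fun gx : G × X => (gx.1 • gx.2, gx.2)) :=
      ProperSMul.isProperMap_smul_pair
    have hS : IsCompact ((fun gx : G × X => (gx.1 • gx.2, gx.2)) ⁻¹' (L ×ˢ K)) :=
      hΦ.isCompact_preimage (hLc.prod hKc)
    set T : Set G := Prod.fst '' ((fun gx : G × X => (gx.1 • gx.2, gx.2)) ⁻¹' (L ×ˢ K)) with hT
    have hTc : IsCompact T := hS.image continuous_fst
    have hzero' : ∀ t : G, t ∉ T →
        ((Δ t) ^ (-(1:ℝ)/2)) • inner (act f ξ₀) (γ t (act g η₀)) = 0 := by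
      intro t ht
      have h1 : γ t (act g η₀) = act (fun x => g (t⁻¹ • x)) (γ t η₀) := hactequiv t g η₀
      rw [h1, hadj, hcomp]
      have h2 : (fun x => (starRingEnd ℂ) (f x) * g (t⁻¹ • x)) = fun _ => (0:ℂ) := by
        funext x
        by_cases hfx : f x = 0
        · simp [hfx]
        by_cases hgx : g (t⁻¹ • x) = 0
        · simp [hgx]
        exfalso
        apply ht
        refine ⟨(t, t⁻¹ • x), ?_, rfl⟩
        constructor
        · show t • (t⁻¹ • x) ∈ L
          rw [smul_inv_smul]
          exact subset_tsupport f (Function.mem_support.mpr hfx)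
        · exact subset_tsupport g (Function.mem_support.mpr hgx)
      rw [h2, hzero, smul_zero]
    have hsub : Function.support (fun t : G =>
        ((Δ t) ^ (-(1:ℝ)/2)) • inner (act f ξ₀) (γ t (act g η₀))) ⊆ T := by
      intro t ht
      by_contra hnt
      exact ht (hzero' t hnt)
    exact IsCompact.of_isClosed_subset hTc.closure isClosed_closure
      (closure_mono hsub)
end
end

section
/- Let (B,β) be a G-C*-algebra and consider L²(G,B) with the diagonal action (ρ⊗β), where ρ is right translation: ((ρ⊗β)_s x)(t) = β_s(x(ts)). Then for x, y ∈ C_c(G,B) ⊆ L²(G,B), the fixed-module inner product Δ(t)^{-1/2}⟨x, (ρ⊗β)_t(y)⟩_B equals ∫_G ⟨x(s), β_t(y(st))⟩ ds, i.e., equals the standard C_c(G,B)-valued crossed-product inner product ⟨x,y⟩(t) = ∫_G β_{s⁻¹}(⟨x(s),y(st)⟩) ds after applying the transformation U(x)(t) = β_t(x(t)). -/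
open MeasureTheory

noncomputable section

/-- For the weakly proper `(B, G⋊G)`-module `L²(G,B)` with diagonal action
`((ρ⊗β)_s x)(t) = Δ(s)^{1/2} β_s(x(ts))`, the fixed-module inner product
`Δ(t)^{-1/2}⟨x, (ρ⊗β)_t y⟩_B` equals `∫ ⟨x(s), β_t(y(st))⟩ ds`, and this coincides with the
standard `C_c(G,B)`-valued crossed-product inner product after applying `U(x)(t)=β_t(x(t))`. -/
theorem statement16 {G B : Type*} [Group G] [TopologicalSpace G] [IsTopologicalGroup G]
    [MeasurableSpace G] [BorelSpace G] [LocallyCompactSpace G]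
    [NormedRing B] [StarRing B] [CStarRing B] [NormedAlgebra ℂ B] [StarModule ℂ B]
    [CompleteSpace B]
    (β : G →* (B ≃ₐ[ℂ] B)) (hβstar : ∀ (t : G) (b : B), β t (star b) = star (β t b))
    (Δ : G →* ℝ) (hΔpos : ∀ t, 0 < Δ t)
    (x y : G → B) (hx : Continuous x) (hxc : HasCompactSupport x)
    (hy : Continuous y) (hyc : HasCompactSupport y) :
    ∀ t : G,
      (((Δ t) ^ (-(1:ℝ)/2)) •
          ∫ s, star (x s) * (((Δ t) ^ ((1:ℝ)/2)) • β t (y (s * t)))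
            ∂(Measure.haar : Measure G))
        = (∫ s, star (x s) * β t (y (s * t)) ∂(Measure.haar : Measure G)) ∧
      (∫ s, β s⁻¹ (star (β s (x s)) * β (s * t) (y (s * t))) ∂(Measure.haar : Measure G))
        = ∫ s, star (x s) * β t (y (s * t)) ∂(Measure.haar : Measure G) := by
  intro t
  constructor
  · simp only [mul_smul_comm]
    rw [integral_smul, smul_smul, ← Real.rpow_add (hΔpos t)]
    norm_num
  · refine integral_congr_ae (Filter.Eventually.of_forall fun s => ?_)
    have h1 : star (β s (x s)) = β s (star (x s)) := (hβstar s _).symm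
    have hmul : ∀ (a b : G) (c : B), β a (β b c) = β (a * b) c := fun a b c => by
      rw [β.map_mul]; rfl
    beta_reduce
    rw [h1, map_mul, hmul, hmul, inv_mul_cancel, inv_mul_cancel_left, β.map_one]
    rfl
end
end

section
/- In the symmetric imprimitivity setting, for ξ, η ∈ A_c and h ∈ H, the formulas ⟨⟨ξ,η⟩⟩_H(h) = Δ_H(h)^{-1/2} ∫_G^{st} α_s(ξ α_h(η*)) ds and ⟨⟨ξ,η⟩⟩_G(s) = Δ_G(s)^{-1/2} ∫_H^{st} α_l(ξ* α_s(η)) dl satisfy the associativity relation ⟨⟨ξ,η⟩⟩_H · ζ = ξ · ⟨⟨η,ζ⟩⟩_G for all ζ ∈ A_c, where f·ξ = ∫_H Δ_H(l)^{1/2} f(l) α_l(ξ) dl and ξ·ψ = ∫_G Δ_G(t)^{-1/2} α_t(ξψ(t⁻¹)) dt. -/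
open MeasureTheory

noncomputable section

def algEquivToStar {A : Type*} [Semiring A] [Algebra ℂ A] [Star A]
    (e : A ≃ₐ[ℂ] A) (h : ∀ a, e (star a) = star (e a)) : A ≃⋆ₐ[ℂ] A :=
  { e.toRingEquiv with
    map_star' := h
    map_smul' := fun r a => map_smul e r a }

/-- Symmetric imprimitivity associativity: for `ξ, η, ζ ∈ A_c` the
`C_c(H, A_c^G)`- and `C_c(G, A_c^H)`-valued inner products satisfy
`⟨⟨ξ,η⟩⟩_H · ζ = ξ · ⟨⟨η,ζ⟩⟩_G`.  Unfolding the strict unconditional integrals against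
elements of `A_c` (which is how they are characterized), this is the displayed identity of
Bochner integrals below.  `αG, αH` are the commuting actions of `G` and `H` on `A`. -/
theorem statement18 {G H A : Type*}
    [Group G] [TopologicalSpace G] [IsTopologicalGroup G]
    [MeasurableSpace G] [BorelSpace G] [LocallyCompactSpace G]
    [Group H] [TopologicalSpace H] [IsTopologicalGroup H]
    [MeasurableSpace H] [BorelSpace H] [LocallyCompactSpace H]
    [NormedRing A] [StarRing A] [CStarRing A] [NormedAlgebra ℂ A] [StarModule ℂ A]
    [CompleteSpace A]
    (αG : G →* (A ≃ₐ[ℂ] A)) (hαGstar : ∀ (t : G) (a : A), αG t (star a) = star (αG t a))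
    (αH : H →* (A ≃ₐ[ℂ] A)) (hαHstar : ∀ (l : H) (a : A), αH l (star a) = star (αH l a))
    (hcommute : ∀ (t : G) (l : H) (a : A), αG t (αH l a) = αH l (αG t a))
    (ΔG : G →* ℝ) (hΔGpos : ∀ t, 0 < ΔG t)
    (ΔH : H →* ℝ) (hΔHpos : ∀ l, 0 < ΔH l)
    (ξ η ζ : A)
    -- compact supports of the integrands (coming from `ξ, η, ζ ∈ A_c` and properness)
    (hcont1 : Continuous fun p : G × H => αG p.1 (ξ * αH p.2 (star η)) * αH p.2 ζ)
    (hsupp1 : HasCompactSupport fun p : G × H => αG p.1 (ξ * αH p.2 (star η)) * αH p.2 ζ)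
    (hcont2 : Continuous fun p : G × H => αG p.1 (ξ * αH p.2 (star η * αG p.1⁻¹ ζ)))
    (hsupp2 : HasCompactSupport fun p : G × H =>
        αG p.1 (ξ * αH p.2 (star η * αG p.1⁻¹ ζ))) :
    (∫ l, ((ΔH l) ^ ((1:ℝ)/2)) •
        (((ΔH l) ^ (-(1:ℝ)/2)) •
          ∫ s, αG s (ξ * αH l (star η)) * αH l ζ ∂(Measure.haar : Measure G))
        ∂(Measure.haar : Measure H))
      = ∫ t, ((ΔG t) ^ (-(1:ℝ)/2)) •
          αG t (((ΔG t⁻¹) ^ (-(1:ℝ)/2)) •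
            ∫ l, ξ * αH l (star η * αG t⁻¹ ζ) ∂(Measure.haar : Measure H))
          ∂(Measure.haar : Measure G) := by
  letI : CStarAlgebra A := ⟨⟩
  set f : G → H → A := fun s l => αG s (ξ * αH l (star η)) * αH l ζ with hfdef
  -- LHS: scalars cancel
  have hL : (∫ l, ((ΔH l) ^ ((1:ℝ)/2)) • (((ΔH l) ^ (-(1:ℝ)/2)) •
        ∫ s, f s l ∂(Measure.haar : Measure G)) ∂(Measure.haar : Measure H))
      = ∫ l, ∫ s, f s l ∂(Measure.haar : Measure G) ∂(Measure.haar : Measure H) := by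
    congr 1; ext l
    rw [smul_smul, ← Real.rpow_add (hΔHpos l)]
    norm_num
  rw [hL]
  -- Fubini swap
  have hswap : (∫ l, ∫ s, f s l ∂(Measure.haar : Measure G) ∂(Measure.haar : Measure H))
      = ∫ t, ∫ l, f t l ∂(Measure.haar : Measure H) ∂(Measure.haar : Measure G) := by
    apply (integral_integral_swap_of_hasCompactSupport ?_ ?_).symm
    · exact hcont1
    · exact hsupp1
  rw [hswap]
  -- RHS: pointwise equality of integrands
  congr 1; ext t
  -- the continuous linear map given by αG t
  have hcontt : ∀ u : G, Continuous (αG u) := fun u =>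
    (StarAlgEquiv.isometry (algEquivToStar (αG u) (hαGstar u))).continuous
  set L : A →L[ℂ] A := ⟨(αG t).toLinearMap, hcontt t⟩ with hLdef
  set g : H → A := fun l => ξ * αH l (star η * αG t⁻¹ ζ) with hgdef
  have hge : ∀ l, αG t (g l) = f t l := by
    intro l
    have h1 : αG t (αG t⁻¹ ζ) = ζ := by
      rw [← AlgEquiv.mul_apply, ← map_mul, mul_inv_cancel, map_one, AlgEquiv.one_apply]
    simp only [hgdef, hfdef, map_mul, ← mul_assoc]
    rw [hcommute t l (αG t⁻¹ ζ), h1]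
  -- g is continuous with compact support
  have hF2 : ∀ l, (fun p : G × H => αG p.1 (ξ * αH p.2 (star η * αG p.1⁻¹ ζ))) (t, l)
      = αG t (g l) := fun l => rfl
  have hgcont : Continuous g := by
    have : g = fun l => αG t⁻¹
        ((fun p : G × H => αG p.1 (ξ * αH p.2 (star η * αG p.1⁻¹ ζ))) (t, l)) := by
      funext l
      rw [hF2 l, ← AlgEquiv.mul_apply, ← map_mul, inv_mul_cancel, map_one, AlgEquiv.one_apply]
    rw [this]
    exact (hcontt t⁻¹).comp (hcont2.comp (Continuous.prodMk_right t))
  have hgsupp : HasCompactSupport g := by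
    apply HasCompactSupport.intro
      (IsCompact.image (hsupp2 : IsCompact (tsupport _)) continuous_snd)
    intro l hl
    have hnot : (t, l) ∉ tsupport fun p : G × H =>
        αG p.1 (ξ * αH p.2 (star η * αG p.1⁻¹ ζ)) := by
      intro hmem
      exact hl ⟨(t, l), hmem, rfl⟩
    have h0 : (fun p : G × H => αG p.1 (ξ * αH p.2 (star η * αG p.1⁻¹ ζ))) (t, l) = 0 :=
      image_eq_zero_of_notMem_tsupport
        (f := fun p : G × H => αG p.1 (ξ * αH p.2 (star η * αG p.1⁻¹ ζ))) hnot
    rw [hF2 l] at h0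
    exact (αG t).injective (h0.trans (map_zero (αG t)).symm)
  have hgint : Integrable g (Measure.haar : Measure H) :=
    hgcont.integrable_of_hasCompactSupport hgsupp
  -- pull scalars and αG t through the integral
  have hmul : ΔG t⁻¹ = (ΔG t)⁻¹ :=
    eq_inv_of_mul_eq_one_left (by rw [← map_mul, inv_mul_cancel, map_one])
  have hsmul : αG t ((((ΔG t⁻¹) ^ (-(1:ℝ)/2)) : ℝ) • ∫ l, g l ∂(Measure.haar : Measure H))
      = (((ΔG t⁻¹) ^ (-(1:ℝ)/2)) : ℝ) • αG t (∫ l, g l ∂(Measure.haar : Measure H)) :=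
    (αG t).toLinearMap.map_smul_of_tower _ _
  have hint : αG t (∫ l, g l ∂(Measure.haar : Measure H))
      = ∫ l, f t l ∂(Measure.haar : Measure H) := by
    have := (L.integral_comp_comm hgint).symm
    simp only [hLdef, ContinuousLinearMap.coe_mk', AlgEquiv.toLinearMap_apply] at this
    refine this.trans ?_
    exact integral_congr_ae (Filter.Eventually.of_forall fun l => hge l)
  rw [hsmul, hint, smul_smul, hmul, Real.inv_rpow (hΔGpos t).le,
    mul_inv_cancel₀ (ne_of_gt (Real.rpow_pos_of_pos (hΔGpos t) _)), one_smul]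
end
end

section
/- Let A be a proper X⋊G-algebra with central structure map φ : C_0(X) → ZM(A). Then the generalized fixed-point algebra with compact supports A_c^G is contained in Kasparov's fixed-point algebra A^G := C_0(G\X)·{m ∈ M(A)^G : C_0(X)·m ⊆ A}, and the set {m ∈ M(A)^G : C_0(X)·m ⊆ A} is a norm-closed subalgebra of M(A); consequently the closure of A_c^G in M(A) is contained in A^G. -/
open scoped BoundedContinuousFunction

noncomputable section

/-- Pull back a bounded continuous real function along a continuous map, as a
bounded continuous complex function. -/
def bcfPull {X Q : Type*} [TopologicalSpace X] [TopologicalSpace Q]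
    (p : X → Q) (hp : Continuous p) (U : C(Q, ℝ)) (hU : ∀ y, |U y| ≤ 1) : X →ᵇ ℂ :=
  BoundedContinuousFunction.ofNormedAddCommGroup (fun x => (U (p x) : ℂ))
    (Complex.continuous_ofReal.comp (U.continuous.comp hp)) 1
    (fun x => by simpa using hU (p x))

@[simp] lemma bcfPull_apply {X Q : Type*} [TopologicalSpace X] [TopologicalSpace Q]
    (p : X → Q) (hp : Continuous p) (U : C(Q, ℝ)) (hU : ∀ y, |U y| ≤ 1) (x : X) :
    bcfPull p hp U hU x = (U (p x) : ℂ) := rfl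

/-- "Division" of bounded continuous functions: if `h` is bounded below on a neighborhood of
the support of `u`, there is a bounded continuous `g` with `h * g = u`. -/
lemma bcf_div {X : Type*} [TopologicalSpace X] (u h : X →ᵇ ℂ) (c : ℝ) (hc : 0 < c)
    (h0 : ∀ x, h x = 0 → ∀ᶠ y in nhds x, u y = 0)
    (hlow : ∀ x, u x ≠ 0 → c ≤ ‖h x‖)
    (hu1 : ∀ x, ‖u x‖ ≤ 1) :
    ∃ g : X →ᵇ ℂ, h * g = u ∧ (∀ x, g x = u x * (h x)⁻¹) ∧ ∀ x, ‖g x‖ ≤ c⁻¹ := by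
  have hzero : ∀ x, h x = 0 → u x = 0 := by
    intro x hx
    by_contra hu
    have := hlow x hu
    rw [hx, norm_zero] at this
    exact absurd (lt_of_lt_of_le hc this) (lt_irrefl 0)
  have hbound : ∀ x, ‖u x * (h x)⁻¹‖ ≤ c⁻¹ := by
    intro x
    by_cases hux : u x = 0
    · simp [hux, inv_nonneg.mpr hc.le]
    · rw [norm_mul, norm_inv]
      calc ‖u x‖ * ‖h x‖⁻¹ ≤ 1 * c⁻¹ := by
            refine mul_le_mul (hu1 x) ?_ (by positivity) one_pos.le
            exact inv_anti₀ hc (hlow x hux)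
        _ = c⁻¹ := one_mul _
  have hcont : Continuous fun x => u x * (h x)⁻¹ := by
    rw [continuous_iff_continuousAt]
    intro x
    by_cases hx : h x = 0
    · refine Filter.EventuallyEq.continuousAt (y := 0) ?_
      exact (h0 x hx).mono fun y hy => by simp [hy]
    · exact (u.continuous.continuousAt).mul
        ((h.continuous.continuousAt).inv₀ hx)
  refine ⟨BoundedContinuousFunction.ofNormedAddCommGroup _ hcont c⁻¹ hbound, ?_, fun x => rfl,
    hbound⟩
  ext x
  show h x * (u x * (h x)⁻¹) = u x
  by_cases hx : h x = 0
  · simp [hx, hzero x hx]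
  · calc h x * (u x * (h x)⁻¹) = u x * (h x * (h x)⁻¹) := by ring
      _ = u x := by rw [mul_inv_cancel₀ hx, mul_one]

section Quot

variable {G X : Type*} [Group G] [TopologicalSpace G] [IsTopologicalGroup G]
  [TopologicalSpace X] [T2Space X] [LocallyCompactSpace X]
  [MulAction G X] [ContinuousSMul G X] [ProperSMul G X]

omit [IsTopologicalGroup G] [T2Space X] [LocallyCompactSpace X] [ProperSMul G X] in
lemma orbitQuot_openQuot :
    IsOpenQuotientMap (Quotient.mk (MulAction.orbitRel G X)) :=
  MulAction.isOpenQuotientMap_quotientMk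

lemma orbitQuot_locallyCompact : LocallyCompactSpace (Quotient (MulAction.orbitRel G X)) := by
  haveI : T2Space (Quotient (MulAction.orbitRel G X)) :=
    t2Space_quotient_mulAction_of_properSMul
  haveI : WeaklyLocallyCompactSpace (Quotient (MulAction.orbitRel G X)) := by
    constructor
    intro y
    obtain ⟨x, rfl⟩ := (orbitQuot_openQuot (G := G) (X := X)).surjective y
    obtain ⟨C, hC, hCx⟩ := exists_compact_mem_nhds x
    exact ⟨Quotient.mk _ '' C, hC.image (orbitQuot_openQuot (G := G) (X := X)).continuous,
      (orbitQuot_openQuot (G := G) (X := X)).isOpenMap.image_mem_nhds hCx⟩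
  infer_instance

omit [IsTopologicalGroup G] [T2Space X] [ProperSMul G X] in
lemma orbitQuot_lift (S : Set (Quotient (MulAction.orbitRel G X))) (hS : IsCompact S) :
    ∃ K : Set X, IsCompact K ∧ S ⊆ Quotient.mk (MulAction.orbitRel G X) '' K := by
  set q := Quotient.mk (MulAction.orbitRel G X)
  have hmem : ∀ y : Quotient (MulAction.orbitRel G X),
      ∃ C : Set X, IsCompact C ∧ q '' C ∈ nhds y := by
    intro y
    obtain ⟨x, rfl⟩ := (orbitQuot_openQuot (G := G) (X := X)).surjective y
    obtain ⟨C, hC, hCx⟩ := exists_compact_mem_nhds x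
    exact ⟨C, hC, (orbitQuot_openQuot (G := G) (X := X)).isOpenMap.image_mem_nhds hCx⟩
  choose C hCcomp hCnhds using hmem
  obtain ⟨t, ht⟩ := hS.elim_nhds_subcover (fun y => q '' C y) (fun y _ => hCnhds y)
  refine ⟨⋃ y ∈ t, C y, t.isCompact_biUnion (fun y _ => hCcomp y), ?_⟩
  refine ht.2.trans ?_
  rw [Set.image_iUnion₂]

end Quot

set_option maxHeartbeats 3200000 in
/-- Let `A` be a proper `X⋊G`-algebra with *central* structure map
`Φ : C_b(X) → ZM(A)` (here `MA` is an abstract multiplier algebra of `A`, with embedding `ι`).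
Then the fixed-point algebra with compact supports
`A_c^G = C_c(G\X)·{m ∈ M(A)^G : m·f, f·m ∈ A_c ∀ f ∈ C_c(X)}·C_c(G\X)` is contained in
Kasparov's fixed-point algebra `A^G = C_0(G\X)·{m ∈ M(A)^G : C_0(X)·m ⊆ A}`, the set
`{m ∈ M(A)^G : C_0(X)·m ⊆ A}` is a norm-closed subalgebra of `M(A)`, and consequently the
closure of `A_c^G` in `M(A)` is contained in `A^G`. -/
theorem statement19 {G X A MA : Type*} [Group G] [TopologicalSpace G] [IsTopologicalGroup G]
    [TopologicalSpace X] [T2Space X] [LocallyCompactSpace X]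
    [MulAction G X] [ContinuousSMul G X] [ProperSMul G X]
    [NonUnitalNormedRing A] [StarRing A] [CStarRing A] [NormedSpace ℂ A]
    [IsScalarTower ℂ A A] [SMulCommClass ℂ A A] [StarModule ℂ A] [CompleteSpace A]
    [NormedRing MA] [StarRing MA] [CStarRing MA] [NormedAlgebra ℂ MA] [StarModule ℂ MA]
    [CompleteSpace MA]
    -- the embedding of `A` as an essential ideal in its multiplier algebra `MA`
    (ι : A →⋆ₙₐ[ℂ] MA) (hιinj : Function.Injective ι) (hιiso : Isometry ι)
    (hιideal : ∀ (m : MA) (a : A), m * ι a ∈ Set.range ι ∧ ι a * m ∈ Set.range ι)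
    -- the `G`-action on `MA`, extending the action on `A`
    (ᾱ : G →* (MA ≃ₐ[ℂ] MA))
    (hᾱstar : ∀ (t : G) (m : MA), ᾱ t (star m) = star (ᾱ t m))
    (hᾱA : ∀ (t : G) (a : A), ᾱ t (ι a) ∈ Set.range ι)
    -- the central structure map `Φ : C_b(X) → M(A)`
    (Φ : (X →ᵇ ℂ) →⋆ₐ[ℂ] MA)
    (hcentral : ∀ (f : X →ᵇ ℂ) (m : MA), Φ f * m = m * Φ f)
    (hΦequiv : ∀ (t : G) (f g : X →ᵇ ℂ),
        (∀ x : X, g x = f (t⁻¹ • x)) → ᾱ t (Φ f) = Φ g) :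
    -- `C_c(X)`, `C_c(G\X)`, `C_0(X)`, `C_0(G\X)`
    let Cc : Set (X →ᵇ ℂ) := {f | HasCompactSupport (⇑f)}
    let C0 : Set (X →ᵇ ℂ) := {f | ∀ ε > (0:ℝ), ∃ K : Set X, IsCompact K ∧
        ∀ x ∉ K, ‖f x‖ < ε}
    let Ccorb : Set (X →ᵇ ℂ) := {h | (∀ (t : G) (x : X), h (t • x) = h x) ∧
        ∃ K : Set X, IsCompact K ∧ ∀ x : X, (∀ t : G, t⁻¹ • x ∉ K) → h x = 0}
    let C0orb : Set (X →ᵇ ℂ) := {h | (∀ (t : G) (x : X), h (t • x) = h x) ∧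
        ∀ ε > (0:ℝ), ∃ K : Set X, IsCompact K ∧
          ∀ x : X, (∀ t : G, t⁻¹ • x ∉ K) → ‖h x‖ < ε}
    -- `A_c = C_c(X)·A·C_c(X)`
    let Ac : Set A := {a | ∃ f ∈ Cc, ∃ g ∈ Cc, ∃ b : A, ι a = Φ f * ι b * Φ g}
    -- `{m ∈ M(A)^G : m·f, f·m ∈ A_c ∀ f ∈ C_c(X)}`
    let Tc : Set MA := {m | (∀ t : G, ᾱ t m = m) ∧ ∀ f ∈ Cc,
        (∃ a ∈ Ac, Φ f * m = ι a) ∧ (∃ a ∈ Ac, m * Φ f = ι a)}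
    -- `A_c^G = C_c(G\X)·Tc·C_c(G\X)`
    let AcG : Set MA := {m | ∃ h₁ ∈ Ccorb, ∃ h₂ ∈ Ccorb, ∃ n ∈ Tc, m = Φ h₁ * n * Φ h₂}
    -- `{m ∈ M(A)^G : C_0(X)·m ⊆ A}`
    let T0 : Set MA := {m | (∀ t : G, ᾱ t m = m) ∧ ∀ f ∈ C0, Φ f * m ∈ Set.range ι}
    -- Kasparov's fixed-point algebra `A^G = C_0(G\X)·T0`
    let AG : Set MA := {m | ∃ h ∈ C0orb, ∃ n ∈ T0, m = Φ h * n}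
    AcG ⊆ AG ∧
    IsClosed T0 ∧
    (∀ m ∈ T0, ∀ n ∈ T0, m + n ∈ T0 ∧ m * n ∈ T0) ∧
    (∀ m ∈ T0, ∀ c : ℂ, c • m ∈ T0) ∧
    closure AcG ⊆ AG := by
  intro Cc C0 Ccorb C0orb Ac Tc AcG T0 AG
  classical
  letI : CStarAlgebra MA := {}
  letI : NonUnitalCStarAlgebra A := {}
  -- basic continuity facts
  have hΦnorm : ∀ f : X →ᵇ ℂ, ‖Φ f‖ ≤ ‖f‖ := fun f => NonUnitalStarAlgHom.norm_apply_le Φ f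
  have hᾱcont : ∀ t : G, Continuous (⇑(ᾱ t)) := by
    intro t
    let e' : MA ≃⋆ₐ[ℂ] MA :=
      { toRingEquiv := (ᾱ t).toRingEquiv
        map_star' := hᾱstar t
        map_smul' := fun c m => map_smul (ᾱ t) c m }
    have : Isometry ⇑e' := StarAlgEquiv.isometry e'
    exact this.continuous
  have hrange : IsClosed (Set.range ⇑ι) := hιiso.isClosedEmbedding.isClosed_range
  -- range of ι as an additive subgroup
  let RS : AddSubgroup MA :=
    { carrier := Set.range ⇑ι
      add_mem' := by rintro _ _ ⟨a, rfl⟩ ⟨b, rfl⟩; exact ⟨a + b, map_add ι a b⟩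
      zero_mem' := ⟨0, map_zero ι⟩
      neg_mem' := by rintro _ ⟨a, rfl⟩; exact ⟨-a, map_neg ι a⟩ }
  -- invariant functions are fixed by the action
  have hΦinv : ∀ f : X →ᵇ ℂ, (∀ (t : G) (x : X), f (t • x) = f x) → ∀ t : G, ᾱ t (Φ f) = Φ f :=
    fun f hf t => hΦequiv t f f (fun x => (hf t⁻¹ x).symm)
  -- spec-unfolding helpers
  have hCcorb_spec : ∀ p : X →ᵇ ℂ, p ∈ Ccorb →
      (∀ (t : G) (x : X), p (t • x) = p x) ∧
      ∃ K : Set X, IsCompact K ∧ ∀ x : X, (∀ t : G, t⁻¹ • x ∉ K) → p x = 0 := fun p hp => hp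
  have hTc_spec : ∀ nn : MA, nn ∈ Tc →
      (∀ t : G, ᾱ t nn = nn) ∧ ∀ f ∈ Cc,
        (∃ a ∈ Ac, Φ f * nn = ι a) ∧ (∃ a ∈ Ac, nn * Φ f = ι a) := fun nn h => h
  have hT0_spec : ∀ nn : MA, nn ∈ T0 →
      (∀ t : G, ᾱ t nn = nn) ∧ ∀ f ∈ C0, Φ f * nn ∈ Set.range ⇑ι := fun nn h => h
  -- `0` belongs to the elementary sets
  have h0Cc : (0 : X →ᵇ ℂ) ∈ Cc := by
    show HasCompactSupport (⇑(0 : X →ᵇ ℂ))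
    rw [BoundedContinuousFunction.coe_zero]
    exact HasCompactSupport.zero
  have h0Ccorb : (0 : X →ᵇ ℂ) ∈ Ccorb := by
    refine ⟨by simp, ∅, isCompact_empty, by simp⟩
  have h0Tc : (0 : MA) ∈ Tc := by
    refine ⟨fun t => map_zero (ᾱ t), fun f hf => ?_⟩
    have h0Ac : (0 : A) ∈ Ac := ⟨0, h0Cc, 0, h0Cc, 0, by simp⟩
    exact ⟨⟨0, h0Ac, by simp⟩, ⟨0, h0Ac, by simp⟩⟩
  -- Step A : Tc ⊆ T0
  have hTcT0 : Tc ⊆ T0 := by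
    rintro n hn
    obtain ⟨hninv, hnact⟩ := hTc_spec n hn
    refine ⟨hninv, fun f hf => ?_⟩
    have hf' : ∀ ε > (0:ℝ), ∃ K : Set X, IsCompact K ∧ ∀ x ∉ K, ‖f x‖ < ε := hf
    have happrox : ∀ kk : ℕ, ∃ g : X →ᵇ ℂ, g ∈ Cc ∧ ‖f - g‖ ≤ ((kk : ℝ) + 1)⁻¹ := by
      intro kk
      obtain ⟨K, hK, hKf⟩ := hf' ((kk : ℝ) + 1)⁻¹ (by positivity)
      obtain ⟨χ, hχ1, hχ0, hχsupp, hχicc⟩ :=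
        exists_continuous_one_zero_of_isCompact hK isClosed_empty (Set.disjoint_empty K)
      have hχabs : ∀ y, |χ y| ≤ 1 := fun y =>
        abs_le.mpr ⟨by linarith [(hχicc y).1], (hχicc y).2⟩
      set χ' : X →ᵇ ℂ := bcfPull id continuous_id χ hχabs with hχ'
      have hχ'supp : HasCompactSupport (⇑χ') := by
        have : ⇑χ' = (fun r : ℝ => (r : ℂ)) ∘ ⇑χ := rfl
        rw [this]
        exact hχsupp.comp_left (by simp)
      refine ⟨f * χ', ?_, ?_⟩
      · show HasCompactSupport (⇑(f * χ'))
        rw [BoundedContinuousFunction.coe_mul]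
        exact hχ'supp.mul_left
      · refine (BoundedContinuousFunction.norm_le (by positivity)).mpr fun x => ?_
        rw [BoundedContinuousFunction.coe_sub, BoundedContinuousFunction.coe_mul]
        by_cases hx : x ∈ K
        · have : χ x = 1 := hχ1 hx
          simp only [Pi.sub_apply, Pi.mul_apply]
          rw [show χ' x = ((χ x : ℝ) : ℂ) from rfl, this]
          simp [Complex.ofReal_one]
          positivity
        · have h1 : f x - f x * χ' x = f x * (1 - χ' x) := by ring
          simp only [Pi.sub_apply, Pi.mul_apply]
          rw [h1, norm_mul]
          have h2 : ‖(1 : ℂ) - χ' x‖ ≤ 1 := by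
            rw [show χ' x = ((χ x : ℝ) : ℂ) from rfl, show (1 : ℂ) - ((χ x : ℝ) : ℂ) = ((1 - χ x : ℝ) : ℂ)
                by push_cast; ring]
            rw [Complex.norm_real, Real.norm_eq_abs, abs_le]
            constructor <;> [linarith [(hχicc x).2]; linarith [(hχicc x).1]]
          calc ‖f x‖ * ‖(1:ℂ) - χ' x‖ ≤ ((kk : ℝ) + 1)⁻¹ * 1 :=
                mul_le_mul (le_of_lt (hKf x hx)) h2 (norm_nonneg _) (by positivity)
            _ = ((kk : ℝ) + 1)⁻¹ := mul_one _
    choose g hgCc hgnorm using happrox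
    have hten : Filter.Tendsto (fun kk => Φ (g kk) * n) Filter.atTop (nhds (Φ f * n)) := by
      rw [tendsto_iff_norm_sub_tendsto_zero]
      have hb : ∀ kk : ℕ, ‖Φ (g kk) * n - Φ f * n‖ ≤ ((kk : ℝ) + 1)⁻¹ * ‖n‖ := by
        intro kk
        calc ‖Φ (g kk) * n - Φ f * n‖ = ‖Φ (g kk - f) * n‖ := by rw [map_sub, sub_mul]
          _ ≤ ‖Φ (g kk - f)‖ * ‖n‖ := norm_mul_le _ _
          _ ≤ ‖g kk - f‖ * ‖n‖ :=
              mul_le_mul_of_nonneg_right (hΦnorm _) (norm_nonneg _)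
          _ = ‖f - g kk‖ * ‖n‖ := by rw [norm_sub_rev]
          _ ≤ ((kk : ℝ) + 1)⁻¹ * ‖n‖ :=
              mul_le_mul_of_nonneg_right (hgnorm kk) (norm_nonneg _)
      refine squeeze_zero (fun _ => norm_nonneg _) hb ?_
      have h0 : Filter.Tendsto (fun kk : ℕ => ((kk : ℝ) + 1)⁻¹) Filter.atTop (nhds 0) := by
        simpa using (tendsto_one_div_add_atTop_nhds_zero_nat :
          Filter.Tendsto (fun n : ℕ => 1 / ((n : ℝ) + 1)) Filter.atTop (nhds 0))
      simpa using h0.mul_const ‖n‖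
    refine hrange.mem_of_tendsto hten (Filter.Eventually.of_forall fun kk => ?_)
    obtain ⟨a, _, ha⟩ := (hnact (g kk) (hgCc kk)).1
    exact ⟨a, ha.symm⟩
  -- Ccorb is contained in C0orb, and closed under products
  have hCcorbC0orb : Ccorb ⊆ C0orb := by
    rintro p hp
    obtain ⟨hinv, K, hK, hv⟩ := hCcorb_spec p hp
    exact ⟨hinv, fun ε hε => ⟨K, hK, fun x hx => by rw [hv x hx, norm_zero]; exact hε⟩⟩
  -- Every element of AcG is of the form Φ p * n with p ∈ Ccorb, n ∈ Tc
  have hAcGrep : ∀ y ∈ AcG, ∃ p, p ∈ Ccorb ∧ ∃ nn, nn ∈ Tc ∧ y = Φ p * nn := by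
    rintro y ⟨h₁, hh₁, h₂, hh₂, nn, hnn, rfl⟩
    obtain ⟨hinv₁, K₁, hK₁, hv₁⟩ := hCcorb_spec h₁ hh₁
    obtain ⟨hinv₂, K₂, hK₂, hv₂⟩ := hCcorb_spec h₂ hh₂
    refine ⟨h₁ * h₂, ⟨?_, K₁, hK₁, ?_⟩, nn, hnn, ?_⟩
    · intro t x
      rw [BoundedContinuousFunction.coe_mul, Pi.mul_apply, Pi.mul_apply, hinv₁, hinv₂]
    · intro x hx
      rw [BoundedContinuousFunction.coe_mul, Pi.mul_apply, hv₁ x hx, zero_mul]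
    · rw [map_mul, mul_assoc, ← hcentral h₂ nn, ← mul_assoc]
  -- Part 1 : AcG ⊆ AG
  have hpart1 : AcG ⊆ AG := by
    intro y hy
    obtain ⟨p, hp, nn, hnn, rfl⟩ := hAcGrep y hy
    exact ⟨p, hCcorbC0orb hp, nn, hTcT0 hnn, rfl⟩
  -- Part 2 : T0 is closed
  have hpart2 : IsClosed T0 := by
    have hT0eq : T0 = (⋂ t : G, {m : MA | ᾱ t m = m}) ∩
        ⋂ f ∈ C0, {m : MA | Φ f * m ∈ Set.range ⇑ι} := by
      ext m
      simp only [Set.mem_inter_iff, Set.mem_iInter, Set.mem_setOf_eq]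
      exact Iff.rfl
    rw [hT0eq]
    refine IsClosed.inter (isClosed_iInter fun t => ?_)
      (isClosed_biInter fun f _ => ?_)
    · exact isClosed_eq (hᾱcont t) continuous_id
    · exact IsClosed.preimage (continuous_mul_left (Φ f)) hrange
  -- Part 3 : T0 is closed under + and *
  have hpart3 : ∀ m ∈ T0, ∀ n ∈ T0, m + n ∈ T0 ∧ m * n ∈ T0 := by
    intro m hm n hn
    obtain ⟨hminv, hmact⟩ := hT0_spec m hm
    obtain ⟨hninv, hnact⟩ := hT0_spec n hn
    constructor
    · refine ⟨fun t => by rw [map_add, hminv t, hninv t], fun f hf => ?_⟩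
      rw [mul_add]
      obtain ⟨a, ha⟩ := hmact f hf
      obtain ⟨b, hb⟩ := hnact f hf
      exact ⟨a + b, by rw [map_add, ha, hb]⟩
    · refine ⟨fun t => by rw [map_mul, hminv t, hninv t], fun f hf => ?_⟩
      obtain ⟨a, ha⟩ := hmact f hf
      rw [← mul_assoc, ← ha]
      exact (hιideal n a).2
  -- Part 4 : T0 is closed under scalar multiplication
  have hpart4 : ∀ m ∈ T0, ∀ c : ℂ, c • m ∈ T0 := by
    intro m hm c
    obtain ⟨hminv, hmact⟩ := hT0_spec m hm
    refine ⟨fun t => by rw [map_smul, hminv t], fun f hf => ?_⟩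
    obtain ⟨a, ha⟩ := hmact f hf
    exact ⟨c • a, by rw [map_smul, ha, mul_smul_comm]⟩
  refine ⟨hpart1, hpart2, hpart3, hpart4, ?_⟩
  -- Part 5 : closure AcG ⊆ AG
  intro m hm
  -- quotient space of the action
  haveI : T2Space (Quotient (MulAction.orbitRel G X)) :=
    t2Space_quotient_mulAction_of_properSMul
  haveI : LocallyCompactSpace (Quotient (MulAction.orbitRel G X)) := orbitQuot_locallyCompact
  have hqc : Continuous (Quotient.mk (MulAction.orbitRel G X)) :=
    (orbitQuot_openQuot (G := G) (X := X)).continuous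
  set q : X → Quotient (MulAction.orbitRel G X) := Quotient.mk (MulAction.orbitRel G X)
    with hqdef
  have hqinv : ∀ (t : G) (x : X), q (t • x) = q x := by
    intro t x
    apply Quotient.sound
    exact MulAction.orbitRel_apply.mpr (MulAction.mem_orbit _ _)
  have hqeq : ∀ x y : X, q x = q y → ∃ t : G, t • y = x := by
    intro x y h
    rw [hqdef, Quotient.eq] at h
    exact MulAction.mem_orbit_iff.mp (MulAction.orbitRel_apply.mp h)
  -- choose approximating sequence in AcG
  have hex : ∀ k : ℕ, ∃ y, y ∈ AcG ∧ ‖m - y‖ < (4⁻¹ : ℝ) ^ k := by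
    intro k
    obtain ⟨y, hy, hdy⟩ := Metric.mem_closure_iff.mp hm ((4⁻¹ : ℝ) ^ k) (by positivity)
    exact ⟨y, hy, by rwa [dist_eq_norm] at hdy⟩
  choose a haAcG hadist using hex
  have haten : Filter.Tendsto a Filter.atTop (nhds m) := by
    rw [tendsto_iff_norm_sub_tendsto_zero]
    refine squeeze_zero (fun _ => norm_nonneg _) (fun k => ?_)
      (tendsto_pow_atTop_nhds_zero_of_lt_one (r := (4⁻¹ : ℝ)) (by norm_num) (by norm_num))
    rw [norm_sub_rev]
    exact (hadist k).le
  -- telescoping differences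
  set b : ℕ → MA := fun k => match k with
    | 0 => a 0
    | Nat.succ j => a (j + 1) - a j
    with hbdef
  have hpartial : ∀ k : ℕ, ∑ j ∈ Finset.range (k + 1), b j = a k := by
    intro k
    induction k with
    | zero => simp [hbdef]
    | succ j ih =>
      rw [Finset.sum_range_succ, ih]
      show a j + (a (j + 1) - a j) = a (j + 1)
      abel
  have hbnorm : ∀ k : ℕ, ‖b k‖ ≤ (‖m‖ + 8) * (4⁻¹ : ℝ) ^ k := by
    intro k
    cases k with
    | zero =>
      show ‖a 0‖ ≤ _
      calc ‖a 0‖ = ‖m - (m - a 0)‖ := by rw [sub_sub_cancel]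
        _ ≤ ‖m‖ + ‖m - a 0‖ := norm_sub_le _ _
        _ ≤ ‖m‖ + 1 := by
            have := (hadist 0).le
            simpa using add_le_add_left (by simpa using this) ‖m‖
        _ ≤ (‖m‖ + 8) * (4⁻¹ : ℝ) ^ 0 := by norm_num
    | succ j =>
      show ‖a (j + 1) - a j‖ ≤ _
      calc ‖a (j + 1) - a j‖ = ‖(a (j + 1) - m) + (m - a j)‖ := by rw [sub_add_sub_cancel]
        _ ≤ ‖a (j + 1) - m‖ + ‖m - a j‖ := norm_add_le _ _
        _ ≤ (4⁻¹ : ℝ) ^ (j + 1) + (4⁻¹ : ℝ) ^ j := by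
            refine add_le_add ?_ (hadist j).le
            rw [norm_sub_rev]
            exact (hadist (j + 1)).le
        _ ≤ (‖m‖ + 8) * (4⁻¹ : ℝ) ^ (j + 1) := by
            have h4 : (4⁻¹ : ℝ) ^ j = 4 * (4⁻¹ : ℝ) ^ (j + 1) := by
              rw [pow_succ]; ring
            rw [h4]
            have hpow : (0:ℝ) < (4⁻¹ : ℝ) ^ (j + 1) := by positivity
            nlinarith [norm_nonneg m]
  -- representations of the differences
  have hbrep : ∀ k : ℕ, ∃ p₁, p₁ ∈ Ccorb ∧ ∃ p₂, p₂ ∈ Ccorb ∧ ∃ n₁, n₁ ∈ Tc ∧ ∃ n₂, n₂ ∈ Tc ∧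
      b k = Φ p₁ * n₁ - Φ p₂ * n₂ := by
    intro k
    cases k with
    | zero =>
      obtain ⟨p, hp, nn, hnn, heq⟩ := hAcGrep (a 0) (haAcG 0)
      exact ⟨p, hp, 0, h0Ccorb, nn, hnn, 0, h0Tc, by
        show a 0 = Φ p * nn - Φ 0 * 0
        rw [heq, mul_zero, sub_zero]⟩
    | succ j =>
      obtain ⟨p, hp, nn, hnn, heq⟩ := hAcGrep (a (j + 1)) (haAcG (j + 1))
      obtain ⟨p', hp', nn', hnn', heq'⟩ := hAcGrep (a j) (haAcG j)
      exact ⟨p, hp, p', hp', nn, hnn, nn', hnn', by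
        show a (j + 1) - a j = _
        rw [heq, heq']⟩
  choose p₁ hp₁ p₂ hp₂ n₁ hn₁ n₂ hn₂ hbeq using hbrep
  have hp₁inv := fun k => (hCcorb_spec _ (hp₁ k)).1
  have hp₂inv := fun k => (hCcorb_spec _ (hp₂ k)).1
  choose K₁ hK₁c hK₁v using fun k => (hCcorb_spec _ (hp₁ k)).2
  choose K₂ hK₂c hK₂v using fun k => (hCcorb_spec _ (hp₂ k)).2
  -- first layer of Urysohn functions
  have hUex : ∀ k : ℕ, ∃ U : C(Quotient (MulAction.orbitRel G X), ℝ),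
      Set.EqOn U 1 (q '' (K₁ k ∪ K₂ k)) ∧ HasCompactSupport U ∧
      ∀ y, U y ∈ Set.Icc (0:ℝ) 1 := by
    intro k
    obtain ⟨U, h1, h0', hsupp, hicc⟩ := exists_continuous_one_zero_of_isCompact
      (((hK₁c k).union (hK₂c k)).image hqc) isClosed_empty (Set.disjoint_empty _)
    exact ⟨U, h1, hsupp, hicc⟩
  choose U hU1 hUsupp hUicc using hUex
  have hUabs : ∀ k y, |U k y| ≤ 1 := fun k y =>
    abs_le.mpr ⟨by linarith [(hUicc k y).1], (hUicc k y).2⟩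
  set u : ℕ → X →ᵇ ℂ := fun k => bcfPull q hqc (U k) (hUabs k) with hudef
  -- second layer of Urysohn functions
  have hVex : ∀ k : ℕ, ∃ V : C(Quotient (MulAction.orbitRel G X), ℝ),
      Set.EqOn V 1 (tsupport (U k)) ∧ HasCompactSupport V ∧
      ∀ y, V y ∈ Set.Icc (0:ℝ) 1 := by
    intro k
    obtain ⟨V, h1, h0', hsupp, hicc⟩ := exists_continuous_one_zero_of_isCompact
      (hUsupp k) isClosed_empty (Set.disjoint_empty _)
    exact ⟨V, h1, hsupp, hicc⟩
  choose V hV1 hVsupp hVicc using hVex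
  choose L hLc hLsub using fun k => orbitQuot_lift (tsupport (V k)) (hVsupp k)
  -- the function TQ on the quotient
  set TQ : Quotient (MulAction.orbitRel G X) → ℝ :=
    fun y => ∑' k : ℕ, (2⁻¹ : ℝ) ^ k * V k y with hTQdef
  have hgeo : Summable (fun k : ℕ => (2⁻¹ : ℝ) ^ k) :=
    summable_geometric_of_lt_one (by norm_num) (by norm_num)
  have hterm_bound : ∀ (y) (k : ℕ), ‖(2⁻¹ : ℝ) ^ k * V k y‖ ≤ (2⁻¹ : ℝ) ^ k := by
    intro y k
    rw [norm_mul]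
    calc ‖(2⁻¹ : ℝ) ^ k‖ * ‖V k y‖ ≤ (2⁻¹ : ℝ) ^ k * 1 := by
          refine mul_le_mul (le_of_eq ?_) ?_ (norm_nonneg _) (by positivity)
          · rw [Real.norm_eq_abs, abs_of_nonneg (by positivity)]
          · rw [Real.norm_eq_abs]
            exact abs_le.mpr ⟨by linarith [(hVicc k y).1], (hVicc k y).2⟩
      _ = (2⁻¹ : ℝ) ^ k := mul_one _
  have hTQsum : ∀ y, Summable (fun k : ℕ => (2⁻¹ : ℝ) ^ k * V k y) := fun y =>
    Summable.of_norm_bounded hgeo (hterm_bound y)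
  have hTQnonneg : ∀ y, 0 ≤ TQ y := fun y =>
    tsum_nonneg fun k => mul_nonneg (by positivity) (hVicc k y).1
  have hTQcont : Continuous TQ :=
    continuous_tsum (fun k => continuous_const.mul (V k).continuous) hgeo
      (fun k y => hterm_bound y k)
  have hTQle : ∀ y, TQ y ≤ 2 := by
    intro y
    calc TQ y ≤ ∑' k : ℕ, (2⁻¹ : ℝ) ^ k := by
          refine Summable.tsum_le_tsum (fun k => ?_) (hTQsum y) hgeo
          calc (2⁻¹ : ℝ) ^ k * V k y ≤ (2⁻¹ : ℝ) ^ k * 1 :=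
                mul_le_mul_of_nonneg_left (hVicc k y).2 (by positivity)
            _ = (2⁻¹ : ℝ) ^ k := mul_one _
      _ = (1 - 2⁻¹ : ℝ)⁻¹ := tsum_geometric_of_lt_one (by norm_num) (by norm_num)
      _ = 2 := by norm_num
  have hTQlow : ∀ (k : ℕ) (y), y ∈ tsupport (U k) → (2⁻¹ : ℝ) ^ k ≤ TQ y := by
    intro k y hy
    have h1 : V k y = 1 := hV1 k hy
    have := Summable.le_tsum (hTQsum y) k
      (fun j _ => mul_nonneg (by positivity) (hVicc j y).1)
    rwa [h1, mul_one] at this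
  -- the function hF = Φ-level h
  set hF : X →ᵇ ℂ := BoundedContinuousFunction.ofNormedAddCommGroup
      (fun x => ((TQ (q x) : ℝ) : ℂ))
      (Complex.continuous_ofReal.comp (hTQcont.comp hqc)) 2
      (fun x => by
        rw [Complex.norm_real, Real.norm_eq_abs, abs_of_nonneg (hTQnonneg (q x))]
        exact hTQle (q x))
    with hFdef
  have hFval : ∀ x, hF x = ((TQ (q x) : ℝ) : ℂ) := fun x => rfl
  have hFnorm : ∀ x, ‖hF x‖ = TQ (q x) := by
    intro x
    rw [hFval, Complex.norm_real, Real.norm_eq_abs, abs_of_nonneg (hTQnonneg (q x))]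
  have hFinv : ∀ (t : G) (x : X), hF (t • x) = hF x := by
    intro t x
    rw [hFval, hFval, hqinv t x]
  -- division functions g k
  have hgex : ∀ k : ℕ, ∃ g : X →ᵇ ℂ, hF * g = u k ∧ (∀ x, g x = u k x * (hF x)⁻¹) ∧
      ∀ x, ‖g x‖ ≤ (((2⁻¹ : ℝ) ^ k))⁻¹ := by
    intro k
    refine bcf_div (u k) hF ((2⁻¹ : ℝ) ^ k) (by positivity) ?_ ?_ ?_
    · intro x hx
      have hTQ0 : TQ (q x) = 0 := by
        have := hFval x
        rw [hx] at this
        exact_mod_cast this.symm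
      have hnot : q x ∉ tsupport (U k) := by
        intro hmem
        have := hTQlow k (q x) hmem
        rw [hTQ0] at this
        exact absurd (lt_of_lt_of_le (by positivity) this) (lt_irrefl 0)
      have hopen : IsOpen ((tsupport (U k))ᶜ) := (isClosed_tsupport _).isOpen_compl
      refine Filter.eventually_of_mem
        (IsOpen.mem_nhds (hopen.preimage hqc) hnot) (fun y hy => ?_)
      show ((U k (q y) : ℝ) : ℂ) = 0
      rw [image_eq_zero_of_notMem_tsupport hy]
      norm_num
    · intro x hx
      have hne : U k (q x) ≠ 0 := by
        intro h0'
        apply hx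
        show ((U k (q x) : ℝ) : ℂ) = 0
        rw [h0']; norm_num
      have hmem : q x ∈ tsupport (U k) := subset_tsupport _ hne
      rw [hFnorm]
      exact hTQlow k (q x) hmem
    · intro x
      show ‖((U k (q x) : ℝ) : ℂ)‖ ≤ 1
      rw [Complex.norm_real, Real.norm_eq_abs]
      exact hUabs k (q x)
  choose g hghF hgval hgbound using hgex
  have hgnorm : ∀ k, ‖Φ (g k)‖ ≤ (((2⁻¹ : ℝ) ^ k))⁻¹ := fun k =>
    le_trans (hΦnorm _) ((BoundedContinuousFunction.norm_le (by positivity)).mpr (hgbound k))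
  have hginv : ∀ (k : ℕ) (t : G) (x : X), g k (t • x) = g k x := by
    intro k t x
    rw [hgval, hgval, hFinv t x]
    show u k (t • x) * _ = u k x * _
    have : u k (t • x) = u k x := by
      show ((U k (q (t • x)) : ℝ) : ℂ) = ((U k (q x) : ℝ) : ℂ)
      rw [hqinv t x]
    rw [this]
  -- the sum n
  have hsummand : ∀ k : ℕ, ‖Φ (g k) * b k‖ ≤ (‖m‖ + 8) * (2⁻¹ : ℝ) ^ k := by
    intro k
    calc ‖Φ (g k) * b k‖ ≤ ‖Φ (g k)‖ * ‖b k‖ := norm_mul_le _ _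
      _ ≤ (((2⁻¹ : ℝ) ^ k))⁻¹ * ((‖m‖ + 8) * (4⁻¹ : ℝ) ^ k) := by
          refine mul_le_mul (hgnorm k) (hbnorm k) (norm_nonneg _) (by positivity)
      _ = (2 : ℝ) ^ k * ((‖m‖ + 8) * (4⁻¹ : ℝ) ^ k) := by rw [← inv_pow, inv_inv]
      _ = (‖m‖ + 8) * ((2 : ℝ) ^ k * (4⁻¹ : ℝ) ^ k) := by ring
      _ = (‖m‖ + 8) * (2⁻¹ : ℝ) ^ k := by rw [← mul_pow]; norm_num
  have hnsum : Summable (fun k : ℕ => Φ (g k) * b k) :=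
    Summable.of_norm_bounded (hgeo.mul_left (‖m‖ + 8)) hsummand
  set n : MA := ∑' k : ℕ, Φ (g k) * b k with hndef
  have hSN : Filter.Tendsto (fun N => ∑ k ∈ Finset.range N, Φ (g k) * b k)
      Filter.atTop (nhds n) := hnsum.hasSum.tendsto_sum_nat
  -- absorption : Φ (u k) * b k = b k
  have humul : ∀ (k : ℕ) (w : X →ᵇ ℂ), w ∈ Ccorb →
      (∀ x : X, (∀ t : G, t⁻¹ • x ∉ K₁ k ∪ K₂ k) → w x = 0) → u k * w = w := by
    intro k w hw hv
    ext x
    show u k x * w x = w x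
    by_cases hwx : w x = 0
    · rw [hwx, mul_zero]
    · have hex' : ∃ t : G, t⁻¹ • x ∈ K₁ k ∪ K₂ k := by
        by_contra hcon
        push_neg at hcon
        exact hwx (hv x hcon)
      obtain ⟨t, ht⟩ := hex'
      have hqx : q x ∈ q '' (K₁ k ∪ K₂ k) := ⟨t⁻¹ • x, ht, hqinv t⁻¹ x⟩
      have h1 : U k (q x) = 1 := hU1 k hqx
      show ((U k (q x) : ℝ) : ℂ) * w x = w x
      rw [h1]
      norm_num
  have hub : ∀ k : ℕ, Φ (u k) * b k = b k := by
    intro k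
    have h₁ : u k * p₁ k = p₁ k := by
      refine humul k (p₁ k) (hp₁ k) (fun x hx => hK₁v k x fun t => ?_)
      intro hmem
      exact hx t (Set.mem_union_left _ hmem)
    have h₂ : u k * p₂ k = p₂ k := by
      refine humul k (p₂ k) (hp₂ k) (fun x hx => hK₂v k x fun t => ?_)
      intro hmem
      exact hx t (Set.mem_union_right _ hmem)
    rw [hbeq k, mul_sub, ← mul_assoc, ← mul_assoc, ← map_mul, ← map_mul, h₁, h₂]
  have hΦhg : ∀ k : ℕ, Φ hF * Φ (g k) = Φ (u k) := by
    intro k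
    rw [← map_mul, hghF k]
  -- Φ hF * n = m
  have hmain : Φ hF * n = m := by
    have h1 : Filter.Tendsto (fun N => Φ hF * ∑ k ∈ Finset.range N, Φ (g k) * b k)
        Filter.atTop (nhds (Φ hF * n)) := hSN.const_mul (Φ hF)
    have h2 : ∀ N, Φ hF * ∑ k ∈ Finset.range N, Φ (g k) * b k =
        ∑ k ∈ Finset.range N, b k := by
      intro N
      rw [Finset.mul_sum]
      refine Finset.sum_congr rfl fun k _ => ?_
      rw [← mul_assoc, hΦhg k, hub k]
    have h3 : Filter.Tendsto (fun N => ∑ k ∈ Finset.range N, b k)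
        Filter.atTop (nhds (Φ hF * n)) := by
      simpa only [h2] using h1
    have h4 : Filter.Tendsto (fun k : ℕ => ∑ j ∈ Finset.range (k + 1), b j)
        Filter.atTop (nhds (Φ hF * n)) :=
      h3.comp (Filter.tendsto_add_atTop_nat 1)
    have h5 : Filter.Tendsto (fun k : ℕ => ∑ j ∈ Finset.range (k + 1), b j)
        Filter.atTop (nhds m) := by
      simpa only [hpartial] using haten
    exact tendsto_nhds_unique h4 h5
  -- invariance of the pieces
  have hαb : ∀ (k : ℕ) (t : G), ᾱ t (b k) = b k := by
    intro k t
    rw [hbeq k, map_sub, map_mul, map_mul, hΦinv (p₁ k) (hp₁inv k) t,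
      hΦinv (p₂ k) (hp₂inv k) t, (hTc_spec _ (hn₁ k)).1 t, (hTc_spec _ (hn₂ k)).1 t]
  -- n ∈ T0
  have hnT0 : n ∈ T0 := by
    constructor
    · intro t
      have hαS : ∀ N, ᾱ t (∑ k ∈ Finset.range N, Φ (g k) * b k) =
          ∑ k ∈ Finset.range N, Φ (g k) * b k := by
        intro N
        rw [map_sum]
        refine Finset.sum_congr rfl fun k _ => ?_
        rw [map_mul, hΦinv (g k) (hginv k) t, hαb k t]
      have h6 : Filter.Tendsto (fun N => ∑ k ∈ Finset.range N, Φ (g k) * b k)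
          Filter.atTop (nhds (ᾱ t n)) := by
        have := Filter.Tendsto.comp ((hᾱcont t).tendsto n) hSN
        simpa only [Function.comp_def, hαS] using this
      exact tendsto_nhds_unique h6 hSN
    · intro f hf
      have h7 : Filter.Tendsto (fun N => Φ f * ∑ k ∈ Finset.range N, Φ (g k) * b k)
          Filter.atTop (nhds (Φ f * n)) := hSN.const_mul (Φ f)
      refine hrange.mem_of_tendsto h7 (Filter.Eventually.of_forall fun N => ?_)
      have hterm : ∀ k ∈ Finset.range N, Φ f * (Φ (g k) * b k) ∈ RS := by
        intro k _
        have hpiece : ∀ (w : X →ᵇ ℂ) (nn : MA), nn ∈ Tc →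
            Φ f * (Φ (g k) * (Φ w * nn)) ∈ RS := by
          intro w nn hnn
          have hcalc : Φ f * (Φ (g k) * (Φ w * nn)) = Φ (g k * w) * (Φ f * nn) := by
            rw [map_mul]
            calc Φ f * (Φ (g k) * (Φ w * nn))
                = Φ (g k) * (Φ w * nn) * Φ f := hcentral f _
              _ = Φ (g k) * (Φ w * (nn * Φ f)) := by rw [mul_assoc, mul_assoc]
              _ = Φ (g k) * (Φ w * (Φ f * nn)) := by rw [← hcentral f nn]
              _ = Φ (g k) * Φ w * (Φ f * nn) := (mul_assoc _ _ _).symm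
          rw [hcalc]
          obtain ⟨aa, haa⟩ := (hT0_spec _ (hTcT0 hnn)).2 f hf
          rw [← haa]
          exact (hιideal (Φ (g k * w)) aa).1
        have hsplit : Φ f * (Φ (g k) * b k) =
            Φ f * (Φ (g k) * (Φ (p₁ k) * n₁ k)) - Φ f * (Φ (g k) * (Φ (p₂ k) * n₂ k)) := by
          rw [hbeq k, mul_sub, mul_sub]
        rw [hsplit]
        exact sub_mem (hpiece (p₁ k) (n₁ k) (hn₁ k)) (hpiece (p₂ k) (n₂ k) (hn₂ k))
      rw [Finset.mul_sum]
      exact sum_mem hterm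
  -- hF ∈ C0orb
  have hFC0orb : hF ∈ C0orb := by
    refine ⟨hFinv, fun ε hε => ?_⟩
    obtain ⟨N, hN⟩ : ∃ N : ℕ, (2⁻¹ : ℝ) ^ N < ε / 2 :=
      exists_pow_lt_of_lt_one (by positivity) (by norm_num)
    refine ⟨⋃ k ∈ Finset.range (N + 1), L k,
      (Finset.range (N + 1)).isCompact_biUnion (fun k _ => hLc k), ?_⟩
    intro x hx
    have hV0 : ∀ k ≤ N, V k (q x) = 0 := by
      intro k hk
      have hnot : q x ∉ q '' (L k) := by
        rintro ⟨l, hl, hql⟩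
        obtain ⟨t, ht⟩ := hqeq x l hql.symm
        have : t⁻¹ • x ∈ L k := by
          rw [← ht, inv_smul_smul]
          exact hl
        exact hx t (Set.mem_biUnion (Finset.mem_range.mpr (Nat.lt_succ_of_le hk)) this)
      have : q x ∉ tsupport (V k) := fun hmem => hnot (hLsub k hmem)
      exact image_eq_zero_of_notMem_tsupport this
    have htail : TQ (q x) ≤ 2 * (2⁻¹ : ℝ) ^ (N + 1) := by
      have hzero : ∀ k < N + 1, (2⁻¹ : ℝ) ^ k * V k (q x) = 0 := by
        intro k hk
        rw [hV0 k (Nat.lt_succ_iff.mp hk), mul_zero]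
      have hshift : TQ (q x) = ∑' k : ℕ, (2⁻¹ : ℝ) ^ (k + (N + 1)) * V (k + (N + 1)) (q x) := by
        show (∑' k : ℕ, (2⁻¹ : ℝ) ^ k * V k (q x)) = _
        rw [← Summable.sum_add_tsum_nat_add (N + 1) (hTQsum (q x)),
          Finset.sum_eq_zero (fun k hk => hzero k (Finset.mem_range.mp hk)), zero_add]
      rw [hshift]
      calc ∑' k : ℕ, (2⁻¹ : ℝ) ^ (k + (N + 1)) * V (k + (N + 1)) (q x)
          ≤ ∑' k : ℕ, (2⁻¹ : ℝ) ^ (k + (N + 1)) := by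
            refine Summable.tsum_le_tsum (fun k => ?_) ?_ ?_
            · calc (2⁻¹ : ℝ) ^ (k + (N + 1)) * V (k + (N + 1)) (q x)
                  ≤ (2⁻¹ : ℝ) ^ (k + (N + 1)) * 1 :=
                    mul_le_mul_of_nonneg_left (hVicc _ _).2 (by positivity)
                _ = (2⁻¹ : ℝ) ^ (k + (N + 1)) := mul_one _
            · exact (summable_nat_add_iff (N + 1)).mpr (hTQsum (q x))
            · exact (summable_nat_add_iff (N + 1)).mpr hgeo
        _ = (2⁻¹ : ℝ) ^ (N + 1) * (1 - 2⁻¹ : ℝ)⁻¹ := by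
            simp only [pow_add]
            rw [tsum_mul_right, tsum_geometric_of_lt_one (by norm_num) (by norm_num)]
            ring
        _ = 2 * (2⁻¹ : ℝ) ^ (N + 1) := by norm_num; ring
    rw [hFnorm]
    calc TQ (q x) ≤ 2 * (2⁻¹ : ℝ) ^ (N + 1) := htail
      _ = (2⁻¹ : ℝ) ^ N := by rw [pow_succ]; ring
      _ < ε / 2 := hN
      _ < ε := by linarith
  exact ⟨hF, hFC0orb, n, hnT0, hmain.symm⟩
end
end
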